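/- Let n ≥ 1 and let A : ℝ → Matrix (Fin n) (Fin n) ℝ, B : ℝ → Fin n → ℝ and C : ℝ → Fin n → ℝ be continuous on [0,∞). Suppose Φ : ℝ → ℝ → Matrix (Fin n) (Fin n) ℝ is a state-transition matrix for A, i.e. for every τ ≥ 0 one has Φ(τ,τ) = 1 (identity matrix), and for every fixed τ ≥ 0 the map t ↦ Φ(t,τ) is differentiable on [0,∞) with derivative A(t) * Φ(t,τ) at every t ≥ 0. Then for every T > 0 the impulse-response kernel g(t,τ) := C(t) ⬝ᵥ (Φ(t,τ) *ᵥ B(τ)) is (jointly) continuous on the triangular domain D_T := {(t,τ) ∈ ℝ × ℝ : 0 ≤ t ≤ T, 0 ≤ τ ≤ t}. (Paper's Lemma 3.) -/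

import Mathlib

open Matrix Set

/-- The cocycle identity for a state-transition matrix: `Φ t τ = Φ t σ * Φ σ τ`
for all nonnegative `t, σ, τ`, proved via uniqueness of solutions of the linear ODE. -/
private lemma phi_cocycle {n : ℕ}
    (A : ℝ → Matrix (Fin n) (Fin n) ℝ)
    (hA : ContinuousOn A (Ici 0))
    (Φ : ℝ → ℝ → Matrix (Fin n) (Fin n) ℝ)
    (hΦinit : ∀ τ : ℝ, 0 ≤ τ → Φ τ τ = 1)
    (hΦderiv : ∀ τ : ℝ, 0 ≤ τ → ∀ t : ℝ, 0 ≤ t → ∀ i j : Fin n,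
      HasDerivWithinAt (fun s => Φ s τ i j) ((A t * Φ t τ) i j) (Ici 0) t) :
    ∀ t : ℝ, 0 ≤ t → ∀ σ : ℝ, 0 ≤ σ → ∀ τ : ℝ, 0 ≤ τ →
      Φ t τ = Φ t σ * Φ σ τ := by
  intro t ht σ hσ τ hτ
  set M : ℝ := max t σ with hMdef
  have hMt : t ≤ M := le_max_left _ _
  have hMσ : σ ≤ M := le_max_right _ _
  have hMnn : (0:ℝ) ≤ M := le_trans ht hMt
  -- a bound on `A` on `[0, M]`
  set A' : ℝ → (Fin n → Fin n → ℝ) := fun s i j => A s i j with hA'def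
  have hAcont : ContinuousOn A' (Icc (0:ℝ) M) :=
    ContinuousOn.mono (s := Ici 0) hA (fun u hu => hu.1)
  obtain ⟨Cb, hCb⟩ : ∃ Cb, ∀ s ∈ Icc (0:ℝ) M, ‖A' s‖ ≤ Cb :=
    (isCompact_Icc).exists_bound_of_continuousOn hAcont
  set Cb' : ℝ := max Cb 0 with hCb'def
  have hCb'nn : (0:ℝ) ≤ Cb' := le_max_right _ _
  -- the (time-truncated) vector field
  set proj : ℝ → ℝ := fun s => min (max s 0) M with hprojdef
  have hproj_mem : ∀ s, proj s ∈ Icc (0:ℝ) M := fun s =>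
    ⟨le_min (le_max_right _ _) hMnn, min_le_right _ _⟩
  have hproj_eq : ∀ s, 0 ≤ s → s ≤ M → proj s = s := by
    intro s h0 hM
    simp [hprojdef, max_eq_left h0, min_eq_left hM]
  set v : ℝ → (Fin n → Fin n → ℝ) → (Fin n → Fin n → ℝ) :=
    fun s X i j => ∑ k, A (proj s) i k * X k j with hvdef
  have hAentry : ∀ s i k, |A (proj s) i k| ≤ Cb' := by
    intro s i k
    calc |A (proj s) i k| = ‖A' (proj s) i k‖ := rfl
      _ ≤ ‖A' (proj s) i‖ := norm_le_pi_norm _ k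
      _ ≤ ‖A' (proj s)‖ := norm_le_pi_norm _ i
      _ ≤ Cb := hCb _ (hproj_mem s)
      _ ≤ Cb' := le_max_left _ _
  -- Lipschitz bound
  set K : NNReal := Real.toNNReal ((n : ℝ) * Cb') with hKdef
  have hKcoe : (K : ℝ) = (n : ℝ) * Cb' := Real.coe_toNNReal _ (by positivity)
  have hlip : ∀ s, LipschitzWith K (v s) := by
    intro s
    apply LipschitzWith.of_dist_le_mul
    intro X Y
    have hnn : (0:ℝ) ≤ (K : ℝ) * dist X Y := mul_nonneg K.2 dist_nonneg
    rw [dist_pi_le_iff hnn]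
    intro i
    rw [dist_pi_le_iff hnn]
    intro j
    rw [Real.dist_eq]
    have : v s X i j - v s Y i j = ∑ k, A (proj s) i k * (X k j - Y k j) := by
      simp [hvdef, ← Finset.sum_sub_distrib, mul_sub]
    rw [this, hKcoe]
    calc |∑ k, A (proj s) i k * (X k j - Y k j)|
        ≤ ∑ k, |A (proj s) i k * (X k j - Y k j)| := Finset.abs_sum_le_sum_abs _ _
      _ ≤ ∑ _k : Fin n, Cb' * dist X Y := by
          apply Finset.sum_le_sum
          intro k _
          rw [abs_mul]
          have h1 : |X k j - Y k j| ≤ dist X Y := by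
            calc |X k j - Y k j| = dist (X k j) (Y k j) := (Real.dist_eq _ _).symm
              _ ≤ dist (X k) (Y k) := dist_le_pi_dist _ _ j
              _ ≤ dist X Y := dist_le_pi_dist _ _ k
          exact mul_le_mul (hAentry s i k) h1 (abs_nonneg _) hCb'nn
      _ = (n : ℝ) * Cb' * dist X Y := by
          rw [Finset.sum_const, Finset.card_univ, Fintype.card_fin, nsmul_eq_mul, mul_assoc]
  have hlip' : ∀ s, LipschitzOnWith K (v s) (univ : Set (Fin n → Fin n → ℝ)) :=
    fun s => (hlip s).lipschitzOnWith
  -- the two solutions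
  set f : ℝ → (Fin n → Fin n → ℝ) := fun u i j => Φ u τ i j with hfdef
  set g : ℝ → (Fin n → Fin n → ℝ) := fun u i j => (Φ u σ * Φ σ τ) i j with hgdef
  -- continuity of entries of Φ
  have hcontΦ : ∀ τ' : ℝ, 0 ≤ τ' →
      ContinuousOn (fun u => (fun i j => Φ u τ' i j : Fin n → Fin n → ℝ)) (Ici 0) := by
    intro τ' hτ'
    rw [continuousOn_pi]; intro i
    rw [continuousOn_pi]; intro j
    exact fun u hu => (hΦderiv τ' hτ' u hu i j).continuousWithinAt
  have hf_cont : ContinuousOn f (Ici 0) := hcontΦ τ hτ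
  have hg_cont : ContinuousOn g (Ici 0) := by
    have := hcontΦ σ hσ
    rw [continuousOn_pi] at this ⊢
    intro i
    rw [continuousOn_pi]; intro j
    have hsum : ∀ u, g u i j = ∑ k, Φ u σ i k * Φ σ τ k j := by
      intro u; simp [hgdef, Matrix.mul_apply]
    simp only [hsum]
    apply continuousOn_finset_sum
    intro k _
    have hk := (this i)
    rw [continuousOn_pi] at hk
    exact (hk k).mul continuousOn_const
  -- derivatives
  have hf_deriv : ∀ u : ℝ, 0 ≤ u → u ≤ M →
      HasDerivWithinAt f (v u (f u)) (Ici 0) u := by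
    intro u hu huM
    rw [hasDerivWithinAt_pi]; intro i
    rw [hasDerivWithinAt_pi]; intro j
    have h := hΦderiv τ hτ u hu i j
    have : v u (f u) i j = (A u * Φ u τ) i j := by
      rw [Matrix.mul_apply]
      simp [hvdef, hfdef, hproj_eq u hu huM]
    rw [this]
    exact h
  have hg_deriv : ∀ u : ℝ, 0 ≤ u → u ≤ M →
      HasDerivWithinAt g (v u (g u)) (Ici 0) u := by
    intro u hu huM
    rw [hasDerivWithinAt_pi]; intro i
    rw [hasDerivWithinAt_pi]; intro j
    have hsum : (fun w => g w i j) = fun w => ∑ k, Φ w σ i k * Φ σ τ k j := by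
      funext w; simp [hgdef, Matrix.mul_apply]
    have h : HasDerivWithinAt (fun w => ∑ k, Φ w σ i k * Φ σ τ k j)
        (∑ k, (A u * Φ u σ) i k * Φ σ τ k j) (Ici 0) u :=
      HasDerivWithinAt.fun_sum fun k _ => (hΦderiv σ hσ u hu i k).mul_const _
    have heq : v u (g u) i j = ∑ k, (A u * Φ u σ) i k * Φ σ τ k j := by
      have h1 : v u (g u) i j = (A u * (Φ u σ * Φ σ τ)) i j := by
        rw [Matrix.mul_apply]
        simp [hvdef, hgdef, hproj_eq u hu huM]
      have h2 : (∑ k, (A u * Φ u σ) i k * Φ σ τ k j) = ((A u * Φ u σ) * Φ σ τ) i j :=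
        (Matrix.mul_apply).symm
      rw [h1, h2, Matrix.mul_assoc]
    rw [hsum, heq]
    exact h
  -- initial condition at σ
  have hinit : f σ = g σ := by
    funext i j
    simp [hfdef, hgdef, hΦinit σ hσ]
  -- apply uniqueness
  have key : f t = g t := by
    rcases le_total σ t with h | h
    · -- forward in time from σ
      have := ODE_solution_unique_of_mem_Icc_right (v := v)
        (s := fun _ => (univ : Set (Fin n → Fin n → ℝ))) (K := K) (fun s _ => hlip' s)
        (f := f) (g := g) (a := σ) (b := t)
        (hf_cont.mono (fun u hu => le_trans hσ hu.1))
        (fun u hu => (hf_deriv u (le_trans hσ hu.1)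
          (le_trans hu.2.le hMt)).mono (fun w hw => le_trans (le_trans hσ hu.1) hw))
        (fun _ _ => mem_univ _)
        (hg_cont.mono (fun u hu => le_trans hσ hu.1))
        (fun u hu => (hg_deriv u (le_trans hσ hu.1)
          (le_trans hu.2.le hMt)).mono (fun w hw => le_trans (le_trans hσ hu.1) hw))
        (fun _ _ => mem_univ _)
        hinit
      exact this ⟨h, le_refl t⟩
    · -- backward in time from σ
      have := ODE_solution_unique_of_mem_Icc_left (v := v)
        (s := fun _ => (univ : Set (Fin n → Fin n → ℝ))) (K := K) (fun s _ => hlip' s)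
        (f := f) (g := g) (a := t) (b := σ)
        (hf_cont.mono (fun u hu => le_trans ht hu.1))
        (fun u hu => by
          have hu0 : (0:ℝ) < u := lt_of_le_of_lt ht hu.1
          exact ((hf_deriv u hu0.le (le_trans hu.2 hMσ)).hasDerivAt
            (Ici_mem_nhds hu0)).hasDerivWithinAt)
        (fun _ _ => mem_univ _)
        (hg_cont.mono (fun u hu => le_trans ht hu.1))
        (fun u hu => by
          have hu0 : (0:ℝ) < u := lt_of_le_of_lt ht hu.1
          exact ((hg_deriv u hu0.le (le_trans hu.2 hMσ)).hasDerivAt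
            (Ici_mem_nhds hu0)).hasDerivWithinAt)
        (fun _ _ => mem_univ _)
        hinit
      exact this ⟨le_refl t, h⟩
  ext i j
  exact congrFun (congrFun key i) j

theorem impulse_response_kernel_continuousOn
    (n : ℕ) (hn : 1 ≤ n)
    (A : ℝ → Matrix (Fin n) (Fin n) ℝ) (B C : ℝ → Fin n → ℝ)
    (hA : ContinuousOn A (Ici 0))
    (hB : ContinuousOn B (Ici 0))
    (hC : ContinuousOn C (Ici 0))
    (Φ : ℝ → ℝ → Matrix (Fin n) (Fin n) ℝ)
    (hΦinit : ∀ τ : ℝ, 0 ≤ τ → Φ τ τ = 1)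
    (hΦderiv : ∀ τ : ℝ, 0 ≤ τ → ∀ t : ℝ, 0 ≤ t → ∀ i j : Fin n,
      HasDerivWithinAt (fun s => Φ s τ i j) ((A t * Φ t τ) i j) (Ici 0) t) :
    ∀ T : ℝ, 0 < T →
      ContinuousOn (fun p : ℝ × ℝ => C p.1 ⬝ᵥ (Φ p.1 p.2 *ᵥ B p.2))
        {p : ℝ × ℝ | 0 ≤ p.1 ∧ p.1 ≤ T ∧ 0 ≤ p.2 ∧ p.2 ≤ p.1} := by
  intro T _
  have hcoc := phi_cocycle A hA Φ hΦinit hΦderiv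
  -- `ψ t = Φ t 0` is continuous on `[0,∞)`
  have hψ : ContinuousOn (fun t => Φ t 0) (Ici (0:ℝ)) := by
    apply continuousOn_pi.2
    intro i
    apply continuousOn_pi.2
    intro j
    exact fun u hu => (hΦderiv 0 le_rfl u hu i j).continuousWithinAt
  -- `Φ τ 0 * Φ 0 τ = 1`, hence `Φ 0 τ = (Φ τ 0)⁻¹`
  have hunit : ∀ τ : ℝ, 0 ≤ τ → Φ τ 0 * Φ 0 τ = 1 := by
    intro τ hτ
    rw [← hcoc τ hτ 0 le_rfl τ hτ, hΦinit τ hτ]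
  have hinv : ∀ τ : ℝ, 0 ≤ τ → Φ 0 τ = (Φ τ 0)⁻¹ := by
    intro τ hτ
    exact (Matrix.inv_eq_right_inv (hunit τ hτ)).symm
  -- `τ ↦ Φ 0 τ` is continuous on `[0,∞)`
  have hχ : ContinuousOn (fun τ => Φ 0 τ) (Ici (0:ℝ)) := by
    intro τ hτ
    have hdet : IsUnit (Φ τ 0).det := Matrix.isUnit_det_of_right_inverse (hunit τ hτ)
    have hdet0 : (Φ τ 0).det ≠ 0 := IsUnit.ne_zero hdet
    have hRinv : ContinuousAt Ring.inverse (Φ τ 0).det := by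
      rw [Ring.inverse_eq_inv']
      exact continuousAt_inv₀ hdet0
    have hic : ContinuousAt Inv.inv (Φ τ 0) := continuousAt_matrix_inv _ hRinv
    have : ContinuousWithinAt (fun τ' => (Φ τ' 0)⁻¹) (Ici 0) τ := by
      have h := ContinuousAt.comp_continuousWithinAt (g := Inv.inv)
        (f := fun t => Φ t 0) (x := τ) hic (hψ τ hτ)
      exact h
    apply this.congr_of_eventuallyEq_of_mem ?_ hτ
    filter_upwards [self_mem_nhdsWithin] with τ' hτ' using hinv τ' hτ'
  -- rewrite the kernel on the domain
  set D : Set (ℝ × ℝ) := {p : ℝ × ℝ | 0 ≤ p.1 ∧ p.1 ≤ T ∧ 0 ≤ p.2 ∧ p.2 ≤ p.1} with hD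
  have h1 : ∀ p ∈ D, (0:ℝ) ≤ p.1 := fun p hp => hp.1
  have h2 : ∀ p ∈ D, (0:ℝ) ≤ p.2 := fun p hp => hp.2.2.1
  apply ContinuousOn.congr
    (f := fun p : ℝ × ℝ => C p.1 ⬝ᵥ ((Φ p.1 0 * Φ 0 p.2) *ᵥ B p.2))
  · -- continuity of the reparametrized kernel
    have hC' : ContinuousOn (fun p : ℝ × ℝ => C p.1) D :=
      hC.comp continuousOn_fst h1
    have hB' : ContinuousOn (fun p : ℝ × ℝ => B p.2) D :=
      hB.comp continuousOn_snd h2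
    have hψ' : ContinuousOn (fun p : ℝ × ℝ => Φ p.1 0) D :=
      hψ.comp continuousOn_fst h1
    have hχ' : ContinuousOn (fun p : ℝ × ℝ => Φ 0 p.2) D :=
      hχ.comp continuousOn_snd h2
    have hentryψ : ∀ i k, ContinuousOn (fun p : ℝ × ℝ => Φ p.1 0 i k) D := by
      intro i k
      exact (continuous_apply_apply i k).comp_continuousOn hψ'
    have hentryχ : ∀ k j, ContinuousOn (fun p : ℝ × ℝ => Φ 0 p.2 k j) D := by
      intro k j
      exact (continuous_apply_apply k j).comp_continuousOn hχ'
    have hentryC : ∀ i, ContinuousOn (fun p : ℝ × ℝ => C p.1 i) D := by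
      intro i
      exact (continuous_apply i).comp_continuousOn hC'
    have hentryB : ∀ j, ContinuousOn (fun p : ℝ × ℝ => B p.2 j) D := by
      intro j
      exact (continuous_apply j).comp_continuousOn hB'
    simp only [dotProduct, Matrix.mulVec, Matrix.mul_apply, dotProduct]
    apply continuousOn_finset_sum
    intro i _
    apply ContinuousOn.mul (hentryC i)
    apply continuousOn_finset_sum
    intro j _
    apply ContinuousOn.mul ?_ (hentryB j)
    apply continuousOn_finset_sum
    intro k _
    exact (hentryψ i k).mul (hentryχ k j)
  · -- equality on the domain
    intro p hp
    have h := hcoc p.1 (h1 p hp) 0 le_rfl p.2 (h2 p hp)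
    show C p.1 ⬝ᵥ (Φ p.1 p.2 *ᵥ B p.2) = C p.1 ⬝ᵥ ((Φ p.1 0 * Φ 0 p.2) *ᵥ B p.2)
    rw [h]
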